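/- Let L* ∈ R^{n1×n2} be a matrix of rank r with smallest positive singular value σ_r*, and let Z* = [U*; V*] be the balanced SVD factorization of L* (i.e., U* = Ũ Σ^{1/2}, V* = Ṽ Σ^{1/2} where L* = Ũ Σ Ṽᵀ is the SVD). Then for any Z = [U; V] ∈ R^{(n1+n2)×r}: d_P(Z, Z*)² ≤ (1/((√2 − 1)·σ_r*)) · (‖UVᵀ − L*‖²_F + (1/4)·‖UᵀU − VᵀV‖²_F). -/

import Mathlib

open Matrix

noncomputable def opNorm {m n : Type*} [Fintype m] [Fintype n] [DecidableEq n]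
    (A : Matrix m n ℝ) : ℝ :=
  ‖LinearMap.toContinuousLinearMap (Matrix.toEuclideanLin A)‖

noncomputable def frob {m n : Type*} [Fintype m] [Fintype n] (A : Matrix m n ℝ) : ℝ :=
  Real.sqrt (∑ i, ∑ j, (A i j) ^ 2)

noncomputable def frobS {n1 n2 : ℕ} (S : Finset (Fin n1 × Fin n2))
    (A : Matrix (Fin n1) (Fin n2) ℝ) : ℝ :=
  Real.sqrt (∑ p ∈ S, (A p.1 p.2) ^ 2)

noncomputable def dP {m : Type*} [Fintype m] {r : ℕ}
    (Z Z' : Matrix m (Fin r) ℝ) : ℝ :=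
  sInf { d | ∃ P : Matrix (Fin r) (Fin r) ℝ, Pᵀ * P = 1 ∧ d = frob (Z - Z' * P) }

section Aux
variable {m n : Type*} [Fintype m] [Fintype n]

lemma frob_nonneg (A : Matrix m n ℝ) : 0 ≤ frob A := Real.sqrt_nonneg _

lemma frob_sq (A : Matrix m n ℝ) : frob A ^ 2 = ∑ i, ∑ j, (A i j) ^ 2 :=
  Real.sq_sqrt (by positivity)

lemma frob_sq_eq_trace (A : Matrix m n ℝ) : frob A ^ 2 = trace (Aᵀ * A) := by
  rw [frob_sq, trace]
  rw [Finset.sum_comm]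
  congr 1; ext j
  simp [mul_apply, diag, pow_two]

lemma scalar_key {s w g k : ℝ} (hs : 0 ≤ s) (hw : 0 ≤ w) (hg : s ≤ g) (hk : 0 ≤ k)
    (hcs : k ^ 2 ≤ w * g) :
    2 * (Real.sqrt 2 - 1) * s * (w - 2 * k + g) ≤ w ^ 2 + g ^ 2 - 2 * k ^ 2 := by
  set r2 := Real.sqrt 2 with hr2def
  have hr2 : r2 ^ 2 = 2 := Real.sq_sqrt (by norm_num)
  have hr2pos : 0 ≤ r2 := Real.sqrt_nonneg 2
  have hr2lb : 1 ≤ r2 := by nlinarith [sq_nonneg (r2 - 1)]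
  have hr2ub : r2 ≤ 3 / 2 := by nlinarith [sq_nonneg (r2 - 3 / 2)]
  have hg0 : 0 ≤ g := hs.trans hg
  set c : ℝ := 2 * (r2 - 1) with hcdef
  have hc0 : 0 ≤ c := by nlinarith
  have hc1 : c ≤ 1 := by nlinarith
  have hF0 : 0 ≤ w ^ 2 + g ^ 2 - c * s * (w + g) := by
    have e1 : 0 ≤ (w - (r2 - 1) * s) ^ 2 := sq_nonneg _
    have e2 : 0 ≤ (g - s) * (g + (3 - 2 * r2) * s) :=
      mul_nonneg (by linarith) (by nlinarith)
    have eid : w ^ 2 + g ^ 2 - c * s * (w + g) =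
        (w - (r2 - 1) * s) ^ 2 + (g - s) * (g + (3 - 2 * r2) * s) + (2 - r2 ^ 2) * s ^ 2 := by
      rw [hcdef]; ring
    rw [eid, hr2]
    linarith
  set mq : ℝ := Real.sqrt (w * g) with hmdef
  have hm0 : 0 ≤ mq := Real.sqrt_nonneg _
  have hm2 : mq ^ 2 = w * g := Real.sq_sqrt (mul_nonneg hw hg0)
  have hkm : k ≤ mq := by
    nlinarith [sq_nonneg (k - mq), sq_nonneg (k + mq)]
  have hsum2m : 2 * mq ≤ w + g := by nlinarith [sq_nonneg (w - g)]
  have hFM : 0 ≤ (w + g - 2 * mq) * (w + g + 2 * mq - c * s) := by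
    apply mul_nonneg (by linarith)
    nlinarith
  rcases eq_or_lt_of_le hm0 with h0 | hpos
  · have hk0 : k = 0 := by nlinarith
    rw [hk0]; nlinarith
  · have key : mq * ((w ^ 2 + g ^ 2 - 2 * k ^ 2) - c * s * (w - 2 * k + g)) =
        (mq - k) * (w ^ 2 + g ^ 2 - c * s * (w + g)) +
        k * ((w + g - 2 * mq) * (w + g + 2 * mq - c * s)) +
        2 * k * mq * (mq - k) + 2 * k * (mq ^ 2 - w * g) := by ring
    have h1 : 0 ≤ mq * ((w ^ 2 + g ^ 2 - 2 * k ^ 2) - c * s * (w - 2 * k + g)) := by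
      rw [key, hm2]
      have := mul_nonneg (sub_nonneg.2 hkm) hF0
      have := mul_nonneg hk hFM
      have := mul_nonneg (mul_nonneg (by linarith : (0:ℝ) ≤ 2 * k) hm0) (sub_nonneg.2 hkm)
      linarith
    have := (mul_nonneg_iff_of_pos_left hpos).mp h1
    linarith
end Aux

lemma dP_nonneg {m : Type*} [Fintype m] {r : ℕ} (Z Z' : Matrix m (Fin r) ℝ) : 0 ≤ dP Z Z' := by
  apply Real.sInf_nonneg
  rintro d ⟨P, hP, rfl⟩; exact frob_nonneg _

lemma dP_le {m : Type*} [Fintype m] {r : ℕ} (Z Z' : Matrix m (Fin r) ℝ)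
    {P : Matrix (Fin r) (Fin r) ℝ} (hP : Pᵀ * P = 1) :
    dP Z Z' ≤ frob (Z - Z' * P) := by
  apply csInf_le
  · exact ⟨0, by rintro d ⟨Q, hQ, rfl⟩; exact frob_nonneg _⟩
  · exact ⟨P, hP, rfl⟩

lemma exists_orth_max {r : ℕ} (B : Matrix (Fin r) (Fin r) ℝ) :
    ∃ P : Matrix (Fin r) (Fin r) ℝ, Pᵀ * P = 1 ∧
      ∀ R : Matrix (Fin r) (Fin r) ℝ, Rᵀ * R = 1 → trace (Rᵀ * B) ≤ trace (Pᵀ * B) := by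
  set S : Set (Matrix (Fin r) (Fin r) ℝ) := {P | Pᵀ * P = 1} with hS
  have hcont : Continuous fun P : Matrix (Fin r) (Fin r) ℝ => Pᵀ * P :=
    (continuous_id.matrix_transpose).matrix_mul continuous_id
  have hc : IsCompact S := by
    have hK : IsCompact ((Set.pi Set.univ fun _ : Fin r =>
        Set.pi Set.univ fun _ : Fin r => Set.Icc (-1 : ℝ) 1) :
          Set (Matrix (Fin r) (Fin r) ℝ)) :=
      isCompact_univ_pi fun _ => isCompact_univ_pi fun _ => isCompact_Icc
    apply hK.of_isClosed_subset
    · exact isClosed_singleton.preimage hcont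
    · intro (P : Matrix (Fin r) (Fin r) ℝ) hP
      suffices h : ∀ i j, -1 ≤ P i j ∧ P i j ≤ 1 from fun i _ j _ => h i j
      intro i j
      have h1 : ∑ k, P k j * P k j = 1 := by
        have hP' : Pᵀ * P = 1 := hP
        have h := congrFun (congrFun hP' j) j
        simpa [mul_apply, one_apply] using h
      have h2 : P i j * P i j ≤ 1 := by
        rw [← h1]
        exact Finset.single_le_sum (f := fun k => P k j * P k j)
          (fun k _ => mul_self_nonneg _) (Finset.mem_univ i)
      constructor <;> nlinarith
  have hne : S.Nonempty := ⟨1, by simp [hS]⟩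
  have hfc : ContinuousOn (fun P : Matrix (Fin r) (Fin r) ℝ => trace (Pᵀ * B)) S :=
    (((continuous_id.matrix_transpose).matrix_mul continuous_const).matrix_trace).continuousOn
  obtain ⟨P, hPS, hmax⟩ := hc.exists_isMaxOn hne hfc
  exact ⟨P, hPS, fun R hR => hmax hR⟩

section Var
variable {r : ℕ}

lemma transpose_single (i j : Fin r) (c : ℝ) :
    (Matrix.single i j c)ᵀ = Matrix.single j i c := by
  ext a b
  simp [Matrix.single, Matrix.transpose_apply, and_comm]

lemma trace_single_mul (i j : Fin r) (c : ℝ) (K : Matrix (Fin r) (Fin r) ℝ) :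
    trace (Matrix.single i j c * K) = c * K j i := by
  simp only [trace, diag, mul_apply, Matrix.single, of_apply, ite_mul, zero_mul]
  rw [Finset.sum_comm]
  simp [ite_and, Finset.sum_ite_eq]

lemma exists_good_P (B : Matrix (Fin r) (Fin r) ℝ)
    (hex : ∃ P : Matrix (Fin r) (Fin r) ℝ, Pᵀ * P = 1 ∧
      ∀ R : Matrix (Fin r) (Fin r) ℝ, Rᵀ * R = 1 → trace (Rᵀ * B) ≤ trace (Pᵀ * B)) :
    ∃ P : Matrix (Fin r) (Fin r) ℝ, Pᵀ * P = 1 ∧ (Pᵀ * B)ᵀ = Pᵀ * B ∧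
      ∀ Q : Matrix (Fin r) (Fin r) ℝ, Qᵀ * Q = 1 → ∀ i, 0 ≤ (Qᵀ * (Pᵀ * B) * Q) i i := by
  obtain ⟨P, hP, hmax⟩ := hex
  set K := Pᵀ * B with hKdef
  have hmax' : ∀ R : Matrix (Fin r) (Fin r) ℝ, Rᵀ * R = 1 → trace (Rᵀ * K) ≤ trace K := by
    intro R hR
    have h1 : (P * R)ᵀ * (P * R) = 1 := by
      calc (P * R)ᵀ * (P * R) = Rᵀ * (Pᵀ * P * R) := by
            rw [transpose_mul, Matrix.mul_assoc, Matrix.mul_assoc]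
        _ = 1 := by rw [hP, Matrix.one_mul, hR]
    have h2 := hmax (P * R) h1
    have h3 : trace ((P * R)ᵀ * B) = trace (Rᵀ * K) := by
      rw [transpose_mul, Matrix.mul_assoc]
    have h4 : trace (Pᵀ * B) = trace K := rfl
    rw [h3, h4] at h2
    exact h2
  refine ⟨P, hP, ?_, ?_⟩
  · -- symmetry
    ext i j
    rw [transpose_apply]
    rcases eq_or_ne i j with rfl | hij
    · rfl
    have hji : j ≠ i := hij.symm
    set E := Matrix.single i i (1:ℝ) + Matrix.single j j 1 with hE
    set F := Matrix.single j i (1:ℝ) - Matrix.single i j 1 with hF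
    have hEE : E * E = E := by
      simp [hE, add_mul, mul_add, hij, hji]
    have hEF : E * F = F := by
      simp [hE, hF, add_mul, mul_add, mul_sub, sub_mul, hij, hji]
      try abel
    have hFE : F * E = F := by
      simp [hE, hF, add_mul, mul_add, mul_sub, sub_mul, hij, hji]
      try abel
    have hFF : F * F = -E := by
      simp [hE, hF, mul_sub, sub_mul, hij, hji]
      try abel
    have hEt : Eᵀ = E := by
      simp [hE, transpose_add, transpose_single]
    have hFt : Fᵀ = -F := by
      simp [hF, transpose_sub, transpose_single]
      try abel
    have htrE : trace (E * K) = K i i + K j j := by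
      simp [hE, add_mul, trace_add, trace_single_mul]
    have htrF : trace (F * K) = K i j - K j i := by
      simp [hF, sub_mul, trace_sub, trace_single_mul]
    set q : ℝ := K i i + K j j with hq
    set d : ℝ := K i j - K j i with hd
    have hquad : ∀ t : ℝ, 0 ≤ q * (t * t) + d * t + 0 := by
      intro t
      have hden : (0:ℝ) < 1 + t ^ 2 := by positivity
      set a : ℝ := -2 * t ^ 2 / (1 + t ^ 2) with ha
      set b : ℝ := 2 * t / (1 + t ^ 2) with hb
      set R : Matrix (Fin r) (Fin r) ℝ := 1 + a • E + b • F with hR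
      have hRt : Rᵀ = 1 + a • E - b • F := by
        rw [hR, transpose_add, transpose_add, transpose_one, transpose_smul, transpose_smul,
          hEt, hFt, smul_neg]
        abel
      have h0 : (1 + t ^ 2) ≠ 0 := hden.ne'
      have hcoef : 2 * a + (a * a + b * b) = 0 := by
        rw [ha, hb]
        field_simp
        ring
      have hRR : Rᵀ * R = 1 := by
        rw [hRt, hR]
        have expand : (1 + a • E - b • F) * (1 + a • E + b • F)
            = 1 + (2 * a + (a * a + b * b)) • E := by
          simp only [add_mul, mul_add, sub_mul, mul_sub, Matrix.one_mul, Matrix.mul_one,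
            smul_mul_assoc, mul_smul_comm, hEE, hEF, hFE, hFF, smul_smul, smul_neg]
          module
        rw [expand, hcoef, zero_smul, add_zero]
      have htr : trace (Rᵀ * K) = trace K + (a * q - b * d) := by
        rw [hRt]
        simp only [sub_mul, add_mul, Matrix.one_mul, smul_mul_assoc, trace_sub, trace_add,
          trace_smul, htrE, htrF, smul_eq_mul]
        ring
      have h5 := hmax' R hRR
      rw [htr] at h5
      have h6 : a * q - b * d ≤ 0 := by linarith
      have h7 : -2 * t ^ 2 * q - 2 * t * d ≤ 0 := by
        have := mul_le_mul_of_nonneg_left h6 (le_of_lt hden)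
        rw [mul_zero] at this
        calc -2 * t ^ 2 * q - 2 * t * d = (1 + t ^ 2) * (a * q - b * d) := by
              rw [ha, hb]; field_simp
          _ ≤ 0 := this
      nlinarith
    have h8 := discrim_le_zero hquad
    rw [discrim] at h8
    have h9 : d = 0 := by nlinarith
    rw [hd] at h9
    linarith
  · -- conjugated diagonal nonneg
    intro Q hQ i
    have hQQ : Q * Qᵀ = 1 := mul_eq_one_comm.mp hQ
    set e2 := Matrix.single i i (2:ℝ) with he2
    set Rf : Matrix (Fin r) (Fin r) ℝ := 1 - e2 with hRf
    have hRft : Rfᵀ = Rf := by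
      rw [hRf, transpose_sub, transpose_one, he2, _root_.transpose_single]
    have hsq : e2 * e2 = e2 + e2 := by
      rw [he2, Matrix.single_mul_single_same, ← Matrix.single_add]
      norm_num
    have hRf2 : Rf * Rf = 1 := by
      have expand : Rf * Rf = 1 - e2 - e2 + e2 * e2 := by rw [hRf]; noncomm_ring
      rw [expand, hsq]
      abel
    set R := Q * Rf * Qᵀ with hR
    have hRsym : Rᵀ = R := by
      rw [hR, transpose_mul, transpose_mul, transpose_transpose, hRft, Matrix.mul_assoc]
    have hRR : Rᵀ * R = 1 := by
      rw [hRsym, hR]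
      calc Q * Rf * Qᵀ * (Q * Rf * Qᵀ) = Q * Rf * (Qᵀ * Q) * Rf * Qᵀ := by
            simp only [Matrix.mul_assoc]
        _ = 1 := by rw [hQ, Matrix.mul_one, Matrix.mul_assoc Q Rf Rf, hRf2,
              Matrix.mul_one, hQQ]
    have htr2 : trace (Rᵀ * K) = trace K - 2 * (Qᵀ * K * Q) i i := by
      rw [hRsym, hR]
      have c1 : trace (Q * Rf * Qᵀ * K) = trace (Rf * (Qᵀ * K * Q)) := by
        rw [Matrix.mul_assoc, Matrix.mul_assoc, trace_mul_comm]
        simp only [Matrix.mul_assoc]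
      rw [c1, hRf, sub_mul, Matrix.one_mul, trace_sub, he2, _root_.trace_single_mul]
      have c2 : trace (Qᵀ * K * Q) = trace K := by
        rw [trace_mul_comm, ← Matrix.mul_assoc, hQQ, Matrix.one_mul]
      rw [c2]
    have h5 := hmax' R hRR
    rw [htr2] at h5
    linarith

end Var

section Helpers
variable {r : ℕ}

lemma trace_conj {A Q : Matrix (Fin r) (Fin r) ℝ} (hQQ : Q * Qᵀ = 1) :
    trace (Qᵀ * (A * Q)) = trace A := by
  rw [trace_mul_comm, Matrix.mul_assoc, hQQ, Matrix.mul_one]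

lemma trace_conj2 {A O Q : Matrix (Fin r) (Fin r) ℝ} (hOO : O * Oᵀ = 1) (hQQ : Q * Qᵀ = 1) :
    trace ((Oᵀ * (A * Q))ᵀ * (Oᵀ * (A * Q))) = trace (Aᵀ * A) := by
  have h1 : (Oᵀ * (A * Q))ᵀ = Qᵀ * (Aᵀ * O) := by
    simp only [transpose_mul, transpose_transpose, Matrix.mul_assoc]
  rw [h1]
  have h2 : Qᵀ * (Aᵀ * O) * (Oᵀ * (A * Q)) = Qᵀ * ((Aᵀ * (O * (Oᵀ * A))) * Q) := by
    simp only [Matrix.mul_assoc]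
  rw [h2, trace_conj hQQ, ← Matrix.mul_assoc O Oᵀ A, hOO, Matrix.one_mul]

lemma diag_sq_le_trace_sq {m : Type*} [Fintype m] (X : Matrix m (Fin r) ℝ) :
    ∑ i, ((Xᵀ * X) i i) ^ 2 ≤ trace ((Xᵀ * X) * (Xᵀ * X)) := by
  have hsym : ∀ a b, (Xᵀ * X) a b = (Xᵀ * X) b a := by
    intro a b
    simp [mul_apply, mul_comm]
  have : trace ((Xᵀ * X) * (Xᵀ * X)) = ∑ i, ∑ k, ((Xᵀ * X) i k) ^ 2 := by
    have : ∀ i k : Fin r, (Xᵀ * X) i k * (Xᵀ * X) k i = ((Xᵀ * X) i k) ^ 2 := by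
      intro i k; rw [hsym k i, pow_two]
    simp only [trace, diag, mul_apply]
    refine Finset.sum_congr rfl fun i _ => Finset.sum_congr rfl fun k _ => ?_
    have h := this i k
    simpa [mul_apply] using h
  rw [this]
  apply Finset.sum_le_sum
  intro i _
  exact Finset.single_le_sum (f := fun k => ((Xᵀ * X) i k) ^ 2)
    (fun k _ => sq_nonneg _) (Finset.mem_univ i)

end Helpers
section KeyIneq

lemma frob_outer {m n : Type*} [Fintype m] [Fintype n] (A B : Matrix m n ℝ) :
    frob (A * Aᵀ - B * Bᵀ) ^ 2 =
      trace ((Aᵀ * A) * (Aᵀ * A)) - 2 * trace ((Bᵀ * A)ᵀ * (Bᵀ * A))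
        + trace ((Bᵀ * B) * (Bᵀ * B)) := by
  rw [frob_sq_eq_trace]
  have expand : (A * Aᵀ - B * Bᵀ)ᵀ * (A * Aᵀ - B * Bᵀ) =
      A * Aᵀ * (A * Aᵀ) - A * Aᵀ * (B * Bᵀ) - B * Bᵀ * (A * Aᵀ) + B * Bᵀ * (B * Bᵀ) := by
    simp only [transpose_sub, transpose_mul, transpose_transpose, Matrix.sub_mul, Matrix.mul_sub]
    abel
  rw [expand, trace_add, trace_sub, trace_sub]
  have h1 : ∀ C D : Matrix m n ℝ, trace (C * Cᵀ * (D * Dᵀ)) = trace ((Dᵀ * C)ᵀ * (Dᵀ * C)) := by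
    intro C D
    have e : (Dᵀ * C)ᵀ * (Dᵀ * C) = Cᵀ * (D * (Dᵀ * C)) := by
      simp only [transpose_mul, transpose_transpose, Matrix.mul_assoc]
    have l : trace (C * Cᵀ * (D * Dᵀ)) = trace (Cᵀ * (D * (Dᵀ * C))) := by
      rw [Matrix.mul_assoc, trace_mul_comm]
      simp only [Matrix.mul_assoc]
    rw [l, e]
  rw [h1 A A, h1 A B, trace_mul_comm (B * Bᵀ) (A * Aᵀ), h1 A B, h1 B B]
  have hAA : (Aᵀ * A)ᵀ = Aᵀ * A := by simp
  have hBB : (Bᵀ * B)ᵀ = Bᵀ * B := by simp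
  rw [hAA, hBB]
  ring

lemma trace_conj_sq {r : ℕ} {A Q : Matrix (Fin r) (Fin r) ℝ} (hQQ : Q * Qᵀ = 1)
    (hA : Aᵀ = A) :
    trace ((Qᵀ * (A * Q)) * (Qᵀ * (A * Q))) = trace (A * A) := by
  have h := trace_conj2 (A := A) (O := Q) (Q := Q) hQQ hQQ
  have e : (Qᵀ * (A * Q))ᵀ = Qᵀ * (A * Q) := by
    simp only [transpose_mul, transpose_transpose, hA, Matrix.mul_assoc]
  rw [e, hA] at h
  exact h

lemma key_ineq {m : Type*} [Fintype m] {r : ℕ} (Z Zs : Matrix m (Fin r) ℝ) (σ2 : ℝ)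
    (hσ2 : 0 ≤ σ2)
    (hG : ∀ O : Matrix (Fin r) (Fin r) ℝ, Oᵀ * O = 1 → ∀ i, σ2 ≤ ((Zs * O)ᵀ * (Zs * O)) i i) :
    2 * (Real.sqrt 2 - 1) * σ2 * (dP Z Zs) ^ 2 ≤ frob (Z * Zᵀ - Zs * Zsᵀ) ^ 2 := by
  obtain ⟨P, hP, hsymm, hdpos⟩ := exists_good_P (Zsᵀ * Z) (exists_orth_max _)
  set K : Matrix (Fin r) (Fin r) ℝ := Pᵀ * (Zsᵀ * Z) with hKdef
  have hherm : K.IsHermitian := by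
    rw [Matrix.IsHermitian, conjTranspose_eq_transpose_of_trivial]
    exact hsymm
  set Q : Matrix (Fin r) (Fin r) ℝ := (hherm.eigenvectorUnitary : Matrix (Fin r) (Fin r) ℝ)
    with hQdef
  set ev : Fin r → ℝ := hherm.eigenvalues with hevdef
  have hQ : Qᵀ * Q = 1 := by
    have h := Unitary.coe_star_mul_self hherm.eigenvectorUnitary
    rwa [Matrix.star_eq_conjTranspose, conjTranspose_eq_transpose_of_trivial] at h
  have hQQ : Q * Qᵀ = 1 := mul_eq_one_comm.mp hQ
  have hdiag : Qᵀ * K * Q = Matrix.diagonal ev := by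
    have h := by
      have h0 := hherm.conjStarAlgAut_star_eigenvectorUnitary
      simp only [Unitary.conjStarAlgAut_star_apply, Unitary.coe_star] at h0; exact h0
    rw [Matrix.star_eq_conjTranspose, conjTranspose_eq_transpose_of_trivial] at h
    simpa using h
  set O : Matrix (Fin r) (Fin r) ℝ := P * Q with hOdef
  have hO : Oᵀ * O = 1 := by
    calc Oᵀ * O = Qᵀ * (Pᵀ * P * Q) := by
          rw [hOdef, transpose_mul, Matrix.mul_assoc, Matrix.mul_assoc]
      _ = 1 := by rw [hP, Matrix.one_mul, hQ]
  have hOO : O * Oᵀ = 1 := mul_eq_one_comm.mp hO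
  set X : Matrix m (Fin r) ℝ := Z * Q with hXdef
  set Y : Matrix m (Fin r) ℝ := Zs * O with hYdef
  have hYX : Yᵀ * X = Matrix.diagonal ev := by
    rw [← hdiag, hYdef, hXdef, hOdef, hKdef]
    simp only [transpose_mul, Matrix.mul_assoc]
  set w : Fin r → ℝ := fun i => (Xᵀ * X) i i with hwdef
  set g : Fin r → ℝ := fun i => (Yᵀ * Y) i i with hgdef
  have hw0 : ∀ i, 0 ≤ w i := by
    intro i
    have h : w i = ∑ k, X k i * X k i := by simp [hwdef, mul_apply]
    rw [h]
    exact Finset.sum_nonneg fun k _ => mul_self_nonneg _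
  have hgσ : ∀ i, σ2 ≤ g i := fun i => hG O hO i
  have hev0 : ∀ i, 0 ≤ ev i := by
    intro i
    have h := hdpos Q hQ i
    rw [hdiag] at h
    simpa using h
  have hCS : ∀ i, (ev i) ^ 2 ≤ w i * g i := by
    intro i
    have hevi : ev i = ∑ k, Y k i * X k i := by
      have h : (Yᵀ * X) i i = ∑ k, Y k i * X k i := by simp [mul_apply]
      rw [hYX] at h
      simpa using h
    have hwi : w i = ∑ k, (X k i) ^ 2 := by simp [hwdef, mul_apply, pow_two]
    have hgi : g i = ∑ k, (Y k i) ^ 2 := by simp [hgdef, mul_apply, pow_two]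
    rw [hevi, hwi, hgi]
    calc (∑ k, Y k i * X k i) ^ 2 ≤ (∑ k, (Y k i) ^ 2) * ∑ k, (X k i) ^ 2 :=
          Finset.sum_mul_sq_le_sq_mul_sq _ _ _
      _ = (∑ k, (X k i) ^ 2) * ∑ k, (Y k i) ^ 2 := mul_comm _ _
  have hdP2 : (dP Z Zs) ^ 2 ≤ frob (Z - Zs * P) ^ 2 :=
    pow_le_pow_left₀ (dP_nonneg Z Zs) (dP_le Z Zs hP) 2
  have T1 : frob (Z - Zs * P) ^ 2 = ∑ i, (w i - 2 * ev i + g i) := by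
    rw [frob_sq_eq_trace]
    have expand : (Z - Zs * P)ᵀ * (Z - Zs * P) =
        Zᵀ * Z - Zᵀ * (Zs * P) - Pᵀ * (Zsᵀ * Z) + Pᵀ * (Zsᵀ * (Zs * P)) := by
      simp only [transpose_sub, transpose_mul, Matrix.sub_mul, Matrix.mul_sub, Matrix.mul_assoc]
      abel
    rw [expand, trace_add, trace_sub, trace_sub]
    have e1 : trace (Xᵀ * X) = trace (Zᵀ * Z) := by
      have h1 : Xᵀ * X = Qᵀ * ((Zᵀ * Z) * Q) := by
        rw [hXdef]; simp only [transpose_mul, Matrix.mul_assoc]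
      rw [h1, trace_conj hQQ]
    have e2 : trace (Matrix.diagonal ev) = trace (Pᵀ * (Zsᵀ * Z)) := by
      rw [← hdiag, Matrix.mul_assoc, trace_conj hQQ, hKdef]
    have e3 : trace (Zᵀ * (Zs * P)) = trace (Pᵀ * (Zsᵀ * Z)) := by
      have h1 : (Pᵀ * (Zsᵀ * Z))ᵀ = Zᵀ * (Zs * P) := by
        simp only [transpose_mul, transpose_transpose, Matrix.mul_assoc]
      rw [← h1, trace_transpose]
    have e4 : trace (Yᵀ * Y) = trace (Pᵀ * (Zsᵀ * (Zs * P))) := by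
      have h1 : Yᵀ * Y = Qᵀ * ((Pᵀ * (Zsᵀ * (Zs * P))) * Q) := by
        rw [hYdef, hOdef]; simp only [transpose_mul, Matrix.mul_assoc]
      rw [h1, trace_conj hQQ]
    rw [← e1, e3, ← e2, ← e4]
    have hsumsplit : ∑ i, (w i - 2 * ev i + g i)
        = (∑ i, w i) - 2 * (∑ i, ev i) + ∑ i, g i := by
      rw [Finset.sum_add_distrib, Finset.sum_sub_distrib, Finset.mul_sum]
    rw [hsumsplit]
    have tw : trace (Xᵀ * X) = ∑ i, w i := rfl
    have tg : trace (Yᵀ * Y) = ∑ i, g i := rfl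
    have tev : trace (Matrix.diagonal ev) = ∑ i, ev i := by
      simp [Matrix.trace, Matrix.diag]
    rw [tw, tg, tev]
    ring
  have T2 : frob (Z * Zᵀ - Zs * Zsᵀ) ^ 2 =
      trace ((Xᵀ * X) * (Xᵀ * X)) - 2 * (∑ i, (ev i) ^ 2)
        + trace ((Yᵀ * Y) * (Yᵀ * Y)) := by
    rw [frob_outer Z Zs]
    have c1 : trace ((Xᵀ * X) * (Xᵀ * X)) = trace ((Zᵀ * Z) * (Zᵀ * Z)) := by
      have hxa : Xᵀ * X = Qᵀ * ((Zᵀ * Z) * Q) := by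
        rw [hXdef]; simp only [transpose_mul, Matrix.mul_assoc]
      rw [hxa, trace_conj_sq hQQ (by simp)]
    have c3 : trace ((Yᵀ * Y) * (Yᵀ * Y)) = trace ((Zsᵀ * Zs) * (Zsᵀ * Zs)) := by
      have hya : Yᵀ * Y = Oᵀ * ((Zsᵀ * Zs) * O) := by
        rw [hYdef]; simp only [transpose_mul, Matrix.mul_assoc]
      rw [hya, trace_conj_sq hOO (by simp)]
    have c2 : (∑ i, (ev i) ^ 2) = trace ((Zsᵀ * Z)ᵀ * (Zsᵀ * Z)) := by
      have hyx : Yᵀ * X = Oᵀ * ((Zsᵀ * Z) * Q) := by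
        rw [hYdef, hXdef]; simp only [transpose_mul, Matrix.mul_assoc]
      have h := trace_conj2 (A := Zsᵀ * Z) hOO hQQ
      rw [← hyx, hYX] at h
      rw [← h]
      simp [Matrix.diagonal_transpose, Matrix.diagonal_mul_diagonal, Matrix.trace_diagonal,
        pow_two]
    rw [c1, c3, c2]
  -- chain everything
  have hr2 : (1:ℝ) ≤ Real.sqrt 2 := by
    nlinarith [Real.sq_sqrt (by norm_num : (0:ℝ) ≤ 2), Real.sqrt_nonneg 2,
      sq_nonneg (Real.sqrt 2 - 1)]
  have hcoef0 : 0 ≤ 2 * (Real.sqrt 2 - 1) * σ2 := by nlinarith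
  calc 2 * (Real.sqrt 2 - 1) * σ2 * (dP Z Zs) ^ 2
      ≤ 2 * (Real.sqrt 2 - 1) * σ2 * frob (Z - Zs * P) ^ 2 :=
        mul_le_mul_of_nonneg_left hdP2 hcoef0
    _ = ∑ i, 2 * (Real.sqrt 2 - 1) * σ2 * (w i - 2 * ev i + g i) := by
        rw [T1, Finset.mul_sum]
    _ ≤ ∑ i, (w i ^ 2 + g i ^ 2 - 2 * ev i ^ 2) :=
        Finset.sum_le_sum fun i _ => scalar_key hσ2 (hw0 i) (hgσ i) (hev0 i) (hCS i)
    _ ≤ frob (Z * Zᵀ - Zs * Zsᵀ) ^ 2 := by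
        rw [T2]
        have hX := diag_sq_le_trace_sq X
        have hY := diag_sq_le_trace_sq Y
        have hsplit : ∑ i, (w i ^ 2 + g i ^ 2 - 2 * ev i ^ 2)
            = (∑ i, w i ^ 2) + (∑ i, g i ^ 2) - 2 * (∑ i, ev i ^ 2) := by
          rw [Finset.sum_sub_distrib, Finset.sum_add_distrib, Finset.mul_sum]
        rw [hsplit]
        have hwX : ∑ i, w i ^ 2 = ∑ i, ((Xᵀ * X) i i) ^ 2 := rfl
        have hgY : ∑ i, g i ^ 2 = ∑ i, ((Yᵀ * Y) i i) ^ 2 := rfl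
        rw [hwX, hgY]
        linarith

end KeyIneq
section Final

lemma trace_factor {m n r : ℕ} (X Z : Matrix (Fin m) (Fin r) ℝ) (Y W : Matrix (Fin n) (Fin r) ℝ) :
    trace ((X * Yᵀ)ᵀ * (Z * Wᵀ)) = trace ((Xᵀ * Z) * (Wᵀ * Y)) := by
  have l : (X * Yᵀ)ᵀ * (Z * Wᵀ) = Y * (Xᵀ * (Z * Wᵀ)) := by
    simp only [transpose_mul, transpose_transpose, Matrix.mul_assoc]
  rw [l, trace_mul_comm]
  simp only [Matrix.mul_assoc]

lemma one_lt_sqrt_two' : (1:ℝ) < Real.sqrt 2 := by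
  nlinarith [Real.sq_sqrt (by norm_num : (0:ℝ) ≤ 2), Real.sqrt_nonneg 2]

set_option maxHeartbeats 1600000 in
/-- Lemma SM2.4 of Zilber–Nadler: if `Z* = [ŨΣ^{1/2}; ṼΣ^{1/2}]` is the balanced
SVD factorization of a rank-`r` matrix `L* = ŨΣṼᵀ`, whose smallest positive
singular value is `σr`, then for any `Z = [U; V]`,
`d_P(Z, Z*)² ≤ (‖UVᵀ − L*‖²_F + (1/4)‖UᵀU − VᵀV‖²_F) / ((√2 − 1)σr)`. -/
theorem dP_sq_le_of_balanced_svd {n1 n2 r : ℕ}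
    (Lstar : Matrix (Fin n1) (Fin n2) ℝ) (hrank : Lstar.rank = r)
    (Uo : Matrix (Fin n1) (Fin r) ℝ) (Vo : Matrix (Fin n2) (Fin r) ℝ)
    (s : Fin r → ℝ) (hs : ∀ i, 0 < s i)
    (hUo : Uoᵀ * Uo = 1) (hVo : Voᵀ * Vo = 1)
    (hL : Lstar = Uo * Matrix.diagonal s * Voᵀ)
    (σr : ℝ) (hσr : IsLeast (Set.range s) σr)
    (U : Matrix (Fin n1) (Fin r) ℝ) (V : Matrix (Fin n2) (Fin r) ℝ) :
    (dP (Matrix.fromRows U V)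
        (Matrix.fromRows (Uo * Matrix.diagonal fun i => Real.sqrt (s i))
          (Vo * Matrix.diagonal fun i => Real.sqrt (s i)))) ^ 2 ≤
      (1 / ((Real.sqrt 2 - 1) * σr)) *
        ((frob (U * Vᵀ - Lstar)) ^ 2 + (1 / 4) * (frob (Uᵀ * U - Vᵀ * V)) ^ 2) := by
  have hσrpos : 0 < σr := by
    obtain ⟨i, hi⟩ := hσr.1
    rw [← hi]; exact hs i
  set Dq : Matrix (Fin r) (Fin r) ℝ := Matrix.diagonal fun i => Real.sqrt (s i) with hDq
  have hDqDq : Dq * Dq = Matrix.diagonal s := by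
    rw [hDq, diagonal_mul_diagonal]
    have h : (fun i => Real.sqrt (s i) * Real.sqrt (s i)) = s :=
      funext fun i => Real.mul_self_sqrt (hs i).le
    rw [h]
  set Us : Matrix (Fin n1) (Fin r) ℝ := Uo * Dq with hUsdef
  set Vs : Matrix (Fin n2) (Fin r) ℝ := Vo * Dq with hVsdef
  set Z : Matrix (Fin n1 ⊕ Fin n2) (Fin r) ℝ := Matrix.fromRows U V with hZdef
  set Zs : Matrix (Fin n1 ⊕ Fin n2) (Fin r) ℝ := Matrix.fromRows Us Vs with hZsdef
  have hUsUs : Usᵀ * Us = Matrix.diagonal s := by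
    rw [hUsdef, transpose_mul, hDq, diagonal_transpose, ← hDq, Matrix.mul_assoc,
      ← Matrix.mul_assoc Uoᵀ Uo Dq, hUo, Matrix.one_mul, hDqDq]
  have hVsVs : Vsᵀ * Vs = Matrix.diagonal s := by
    rw [hVsdef, transpose_mul, hDq, diagonal_transpose, ← hDq, Matrix.mul_assoc,
      ← Matrix.mul_assoc Voᵀ Vo Dq, hVo, Matrix.one_mul, hDqDq]
  have hUsVs : Us * Vsᵀ = Lstar := by
    rw [hUsdef, hVsdef, transpose_mul, hDq, diagonal_transpose, ← hDq, Matrix.mul_assoc,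
      ← Matrix.mul_assoc Dq Dq Voᵀ, hDqDq, hL, Matrix.mul_assoc]
  have hW : Zᵀ * Z = Uᵀ * U + Vᵀ * V := by
    rw [hZdef, transpose_fromRows, fromCols_mul_fromRows]
  have hKzz : Zsᵀ * Z = Usᵀ * U + Vsᵀ * V := by
    rw [hZdef, hZsdef, transpose_fromRows, fromCols_mul_fromRows]
  have hGzz : Zsᵀ * Zs = Matrix.diagonal s + Matrix.diagonal s := by
    rw [hZsdef, transpose_fromRows, fromCols_mul_fromRows, hUsUs, hVsVs]
  -- the quadratic-form lower bound hypothesis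
  have hGbound : ∀ O : Matrix (Fin r) (Fin r) ℝ, Oᵀ * O = 1 →
      ∀ i, 2 * σr ≤ ((Zs * O)ᵀ * (Zs * O)) i i := by
    intro O hOorth i
    have h1 : (Zs * O)ᵀ * (Zs * O) = Oᵀ * ((Matrix.diagonal s + Matrix.diagonal s) * O) := by
      rw [transpose_mul, Matrix.mul_assoc, ← Matrix.mul_assoc Zsᵀ Zs O, hGzz]
    have hOone : ∑ k, O k i * O k i = 1 := by
      have h := congrFun (congrFun hOorth i) i
      simpa [mul_apply, one_apply] using h
    rw [h1]
    have hd : ∀ k, ((Matrix.diagonal s + Matrix.diagonal s) * O) k i = (s k + s k) * O k i := by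
      intro k
      simp [Matrix.add_mul]
    have h2 : (Oᵀ * ((Matrix.diagonal s + Matrix.diagonal s) * O)) i i
        = ∑ k, (s k + s k) * (O k i * O k i) := by
      rw [Matrix.mul_apply]
      refine Finset.sum_congr rfl fun k _ => ?_
      rw [Matrix.transpose_apply, hd k]
      ring
    rw [h2]
    calc 2 * σr = ∑ k, 2 * σr * (O k i * O k i) := by
          rw [← Finset.mul_sum, hOone, mul_one]
      _ ≤ ∑ k, (s k + s k) * (O k i * O k i) := by
          apply Finset.sum_le_sum
          intro k _
          have hσs : σr ≤ s k := hσr.2 ⟨k, rfl⟩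
          have := mul_self_nonneg (O k i)
          nlinarith
  have hkey := key_ineq Z Zs (2 * σr) (by linarith) hGbound
  -- master identity
  set a1 : ℝ := trace ((Uᵀ * U) * (Uᵀ * U)) with ha1
  set a2 : ℝ := trace ((Vᵀ * V) * (Vᵀ * V)) with ha2
  set a3 : ℝ := trace ((Uᵀ * U) * (Vᵀ * V)) with ha3
  set b1 : ℝ := trace ((Uᵀ * Us) * (Usᵀ * U)) with hb1
  set b2 : ℝ := trace ((Vᵀ * Vs) * (Vsᵀ * V)) with hb2
  set b3 : ℝ := trace ((Uᵀ * Us) * (Vsᵀ * V)) with hb3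
  set c0 : ℝ := trace ((Matrix.diagonal s : Matrix (Fin r) (Fin r) ℝ) * Matrix.diagonal s)
    with hc0
  have H1 : trace ((Zᵀ * Z) * (Zᵀ * Z)) = a1 + a2 + 2 * a3 := by
    rw [hW]
    simp only [Matrix.add_mul, Matrix.mul_add, trace_add]
    rw [trace_mul_comm (Vᵀ * V) (Uᵀ * U)]
    rw [ha1, ha2, ha3]; ring
  have hb3' : trace ((Vᵀ * Vs) * (Usᵀ * U)) = b3 := by
    rw [← trace_transpose ((Vᵀ * Vs) * (Usᵀ * U))]
    simp only [transpose_mul, transpose_transpose]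
    try rw [hb3]
  have H2 : trace ((Zsᵀ * Z)ᵀ * (Zsᵀ * Z)) = b1 + b2 + 2 * b3 := by
    rw [hKzz]
    simp only [transpose_add, transpose_mul, transpose_transpose, Matrix.add_mul,
      Matrix.mul_add, trace_add]
    rw [hb3', hb1, hb2, hb3]; ring
  have H3 : trace ((Zsᵀ * Zs) * (Zsᵀ * Zs)) = 4 * c0 := by
    rw [hGzz]
    simp only [Matrix.add_mul, Matrix.mul_add, trace_add]
    rw [hc0]; ring
  have H4 : frob (U * Vᵀ - Lstar) ^ 2 = a3 - 2 * b3 + c0 := by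
    rw [← hUsVs, frob_sq_eq_trace]
    have expand : (U * Vᵀ - Us * Vsᵀ)ᵀ * (U * Vᵀ - Us * Vsᵀ)
        = (U * Vᵀ)ᵀ * (U * Vᵀ) - (U * Vᵀ)ᵀ * (Us * Vsᵀ) - (Us * Vsᵀ)ᵀ * (U * Vᵀ)
          + (Us * Vsᵀ)ᵀ * (Us * Vsᵀ) := by
      simp only [transpose_sub, Matrix.sub_mul, Matrix.mul_sub]
      abel
    rw [expand, trace_add, trace_sub, trace_sub, trace_factor U U V V,
      trace_factor U Us V Vs, trace_factor Us U Vs V, trace_factor Us Us Vs Vs]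
    have t1 : trace ((Usᵀ * U) * (Vᵀ * Vs)) = b3 := by
      rw [← trace_transpose ((Usᵀ * U) * (Vᵀ * Vs))]
      simp only [transpose_mul, transpose_transpose]
      rw [trace_mul_comm, hb3]
    have t2 : trace ((Uᵀ * Us) * (Vsᵀ * V)) = b3 := hb3.symm
    have t3 : trace ((Usᵀ * Us) * (Vsᵀ * Vs)) = c0 := by rw [hUsUs, hVsVs, hc0]
    have t4 : trace ((Uᵀ * U) * (Vᵀ * V)) = a3 := ha3.symm
    rw [t1, t2, t3, t4]; ring
  have H5 : frob (Uᵀ * U - Vᵀ * V) ^ 2 = a1 + a2 - 2 * a3 := by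
    rw [frob_sq_eq_trace]
    have expand : (Uᵀ * U - Vᵀ * V)ᵀ * (Uᵀ * U - Vᵀ * V)
        = (Uᵀ * U) * (Uᵀ * U) - (Uᵀ * U) * (Vᵀ * V) - (Vᵀ * V) * (Uᵀ * U)
          + (Vᵀ * V) * (Vᵀ * V) := by
      simp only [transpose_sub, transpose_mul, transpose_transpose, Matrix.sub_mul,
        Matrix.mul_sub]
      abel
    rw [expand, trace_add, trace_sub, trace_sub, trace_mul_comm (Vᵀ * V) (Uᵀ * U)]
    rw [ha1, ha2, ha3]; ring
  have H6 : frob (Uᵀ * Us - Vᵀ * Vs) ^ 2 = b1 + b2 - 2 * b3 := by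
    rw [frob_sq_eq_trace]
    have expand : (Uᵀ * Us - Vᵀ * Vs)ᵀ * (Uᵀ * Us - Vᵀ * Vs)
        = (Usᵀ * U) * (Uᵀ * Us) - (Usᵀ * U) * (Vᵀ * Vs) - (Vsᵀ * V) * (Uᵀ * Us)
          + (Vsᵀ * V) * (Vᵀ * Vs) := by
      simp only [transpose_sub, transpose_mul, transpose_transpose, Matrix.sub_mul,
        Matrix.mul_sub]
      abel
    rw [expand, trace_add, trace_sub, trace_sub]
    have t1 : trace ((Usᵀ * U) * (Uᵀ * Us)) = b1 := by rw [trace_mul_comm, hb1]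
    have t2 : trace ((Vsᵀ * V) * (Vᵀ * Vs)) = b2 := by rw [trace_mul_comm, hb2]
    have t3 : trace ((Usᵀ * U) * (Vᵀ * Vs)) = b3 := by
      rw [← trace_transpose ((Usᵀ * U) * (Vᵀ * Vs))]
      simp only [transpose_mul, transpose_transpose]
      rw [trace_mul_comm, hb3]
    have t4 : trace ((Vsᵀ * V) * (Uᵀ * Us)) = b3 := by rw [trace_mul_comm, hb3]
    rw [t1, t2, t3, t4]; ring
  have master : frob (Z * Zᵀ - Zs * Zsᵀ) ^ 2
      = 4 * frob (U * Vᵀ - Lstar) ^ 2 + frob (Uᵀ * U - Vᵀ * V) ^ 2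
        - 2 * frob (Uᵀ * Us - Vᵀ * Vs) ^ 2 := by
    rw [frob_outer Z Zs, H1, H2, H3, H4, H5, H6]; ring
  have hfrob6 : 0 ≤ frob (Uᵀ * Us - Vᵀ * Vs) ^ 2 := sq_nonneg _
  have hbig : frob (Z * Zᵀ - Zs * Zsᵀ) ^ 2
      ≤ 4 * frob (U * Vᵀ - Lstar) ^ 2 + frob (Uᵀ * U - Vᵀ * V) ^ 2 := by
    rw [master]; linarith
  have hr2 : (1:ℝ) < Real.sqrt 2 := one_lt_sqrt_two'
  have hden : 0 < (Real.sqrt 2 - 1) * σr := mul_pos (by linarith) hσrpos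
  have hchain : 4 * ((Real.sqrt 2 - 1) * σr) * (dP Z Zs) ^ 2
      ≤ 4 * frob (U * Vᵀ - Lstar) ^ 2 + frob (Uᵀ * U - Vᵀ * V) ^ 2 := by
    calc 4 * ((Real.sqrt 2 - 1) * σr) * (dP Z Zs) ^ 2
        = 2 * (Real.sqrt 2 - 1) * (2 * σr) * (dP Z Zs) ^ 2 := by ring
      _ ≤ frob (Z * Zᵀ - Zs * Zsᵀ) ^ 2 := hkey
      _ ≤ 4 * frob (U * Vᵀ - Lstar) ^ 2 + frob (Uᵀ * U - Vᵀ * V) ^ 2 := hbig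
  rw [div_mul_eq_mul_div, one_mul, le_div_iff₀ hden]
  linarith [hchain]

end Final
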